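/- Let ν_t⁰, ν_t¹, ν_s⁰, ν_s¹, ν_t, ν_s be probability measures with finite first moments on a metric space (Z, d_Z), f : Z → Y be L_f-Lipschitz, and o : Y → ℝ be L_o-Lipschitz. With Δ_ts = W₁(ν_t, ν_s), δ_t^g = W₁(ν_t^g, ν_t), δ_s^g = W₁(ν_s^g, ν_s), it holds that |E_{ν_t⁰}[o ∘ f] − E_{ν_t¹}[o ∘ f]| ≤ L_o · L_f · (W₁(ν_s⁰, ν_s¹) + δ_t⁰ + δ_t¹ + δ_s⁰ + δ_s¹ + 2·Δ_ts). -/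

import Mathlib

open MeasureTheory
open scoped NNReal ENNReal

/-- The Wasserstein-1 (Kantorovich) distance between two measures on a metric
space, defined as the infimum of `∫ d(x,y) dπ` over all couplings `π`. -/
noncomputable def W1 {Z : Type*} [MetricSpace Z] [MeasurableSpace Z]
    (μ ν : Measure Z) : ℝ≥0∞ :=
  ⨅ π ∈ {π : Measure (Z × Z) | π.map Prod.fst = μ ∧ π.map Prod.snd = ν},
    ∫⁻ p, edist p.1 p.2 ∂π

/-- `μ` has a finite first moment (about some base point). -/
def FiniteFirstMoment {Z : Type*} [MetricSpace Z] [MeasurableSpace Z]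
    (μ : Measure Z) : Prop :=
  ∃ z₀ : Z, ∫⁻ z, edist z z₀ ∂μ ≠ ∞

set_option linter.unusedSectionVars false

section Helpers

variable {Z : Type*} [MetricSpace Z] [MeasurableSpace Z] [OpensMeasurableSpace Z]

lemma FFM.lint_ne_top (μ : Measure Z) [IsProbabilityMeasure μ]
    (hμ : FiniteFirstMoment μ) (z₁ : Z) : ∫⁻ z, edist z z₁ ∂μ ≠ ∞ := by
  obtain ⟨z₀, h0⟩ := hμ
  have hle : ∫⁻ z, edist z z₁ ∂μ ≤ ∫⁻ z, edist z z₀ + edist z₀ z₁ ∂μ :=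
    lintegral_mono fun z => edist_triangle _ _ _
  rw [lintegral_add_right _ measurable_const, lintegral_const] at hle
  exact ne_top_of_le_ne_top
    (ENNReal.add_ne_top.2 ⟨h0, ENNReal.mul_ne_top (edist_ne_top _ _) (by simp)⟩) hle

lemma dist_integrable (μ : Measure Z) [IsProbabilityMeasure μ]
    (hμ : FiniteFirstMoment μ) (z₁ : Z) : Integrable (fun z => dist z z₁) μ := by
  refine ⟨(continuous_id.dist continuous_const).aestronglyMeasurable, ?_⟩
  rw [HasFiniteIntegral]
  have : ∀ z : Z, (‖dist z z₁‖₊ : ℝ≥0∞) = edist z z₁ := fun z => by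
    rw [edist_dist, ← enorm_eq_nnnorm, Real.enorm_eq_ofReal dist_nonneg]
  simp_rw [enorm_eq_nnnorm, this]
  exact (FFM.lint_ne_top μ hμ z₁).lt_top

lemma lip_integrable (μ : Measure Z) [IsProbabilityMeasure μ]
    (hμ : FiniteFirstMoment μ) (K : ℝ≥0) (g : Z → ℝ) (hg : LipschitzWith K g) :
    Integrable g μ := by
  obtain ⟨z₀, -⟩ := id hμ
  refine Integrable.mono' (((dist_integrable μ hμ z₀).const_mul (K : ℝ)).add
    (integrable_const |g z₀|)) hg.continuous.aestronglyMeasurable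
    (ae_of_all _ fun z => ?_)
  have h1 : |g z - g z₀| ≤ K * dist z z₀ := by
    rw [← Real.dist_eq]; exact hg.dist_le_mul z z₀
  rw [Real.norm_eq_abs]
  calc |g z| = |g z - g z₀ + g z₀| := by ring_nf
    _ ≤ |g z - g z₀| + |g z₀| := abs_add_le _ _
    _ ≤ K * dist z z₀ + |g z₀| := by linarith

lemma coupling_lint_fst (π : Measure (Z × Z)) (μ : Measure Z) (hπ : π.map Prod.fst = μ)
    (h : Z → ℝ≥0∞) (hh : Measurable h) : ∫⁻ p, h p.1 ∂π = ∫⁻ z, h z ∂μ := by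
  rw [← hπ, lintegral_map hh measurable_fst]

lemma coupling_lint_snd (π : Measure (Z × Z)) (ν : Measure Z) (hπ : π.map Prod.snd = ν)
    (h : Z → ℝ≥0∞) (hh : Measurable h) : ∫⁻ p, h p.2 ∂π = ∫⁻ z, h z ∂ν := by
  rw [← hπ, lintegral_map hh measurable_snd]

lemma W1_ne_top (μ ν : Measure Z) [IsProbabilityMeasure μ] [IsProbabilityMeasure ν]
    (hμ : FiniteFirstMoment μ) (hν : FiniteFirstMoment ν) : W1 μ ν ≠ ∞ := by
  obtain ⟨z₀, -⟩ := id hμ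
  have hmem : μ.prod ν ∈ {π : Measure (Z × Z) | π.map Prod.fst = μ ∧ π.map Prod.snd = ν} := by
    constructor <;> simp [Measure.map_fst_prod, Measure.map_snd_prod]
  have hle : W1 μ ν ≤ ∫⁻ p, edist p.1 p.2 ∂(μ.prod ν) := biInf_le _ hmem
  have hcost : ∫⁻ p, edist p.1 p.2 ∂(μ.prod ν)
      ≤ ∫⁻ p, edist p.1 z₀ ∂(μ.prod ν) + ∫⁻ p, edist z₀ p.2 ∂(μ.prod ν) := by
    rw [← lintegral_add_left (by fun_prop)]
    exact lintegral_mono fun p => edist_triangle _ _ _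
  rw [coupling_lint_fst (μ.prod ν) μ (by simp [Measure.map_fst_prod])
      (fun z => edist z z₀) (by fun_prop),
    coupling_lint_snd (μ.prod ν) ν (by simp [Measure.map_snd_prod])
      (fun z => edist z₀ z) (by fun_prop)] at hcost
  refine ne_top_of_le_ne_top (ENNReal.add_ne_top.2 ⟨FFM.lint_ne_top μ hμ z₀, ?_⟩)
    (hle.trans hcost)
  simp_rw [edist_comm z₀]
  exact FFM.lint_ne_top ν hν z₀

lemma abs_integral_sub_le (μ ν : Measure Z) [IsProbabilityMeasure μ] [IsProbabilityMeasure ν]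
    (hμ : FiniteFirstMoment μ) (hν : FiniteFirstMoment ν)
    (K : ℝ≥0) (g : Z → ℝ) (hg : LipschitzWith K g) :
    |∫ z, g z ∂μ - ∫ z, g z ∂ν| ≤ K * (W1 μ ν).toReal := by
  rcases eq_or_ne K 0 with hK | hK
  · obtain ⟨z₀, -⟩ := id hμ
    have hconst : g = fun _ => g z₀ := funext fun z => by
      have := hg.dist_le_mul z z₀
      rw [hK] at this
      simp only [NNReal.coe_zero, zero_mul] at this
      exact dist_le_zero.mp this
    rw [hconst]
    simp [abs_nonneg, mul_nonneg, ENNReal.toReal_nonneg]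
  · -- K ≠ 0
    have hW : W1 μ ν ≠ ∞ := W1_ne_top μ ν hμ hν
    have hgμ : Integrable g μ := lip_integrable μ hμ K g hg
    have hgν : Integrable g ν := lip_integrable ν hν K g hg
    have hK' : (K : ℝ≥0∞) ≠ 0 := by exact_mod_cast hK
    have hdiv : ENNReal.ofReal |∫ z, g z ∂μ - ∫ z, g z ∂ν| / (K : ℝ≥0∞) ≤ W1 μ ν := by
      rw [W1]
      refine le_iInf₂ fun π hπ => ?_
      rw [ENNReal.div_le_iff_le_mul (Or.inl hK') (Or.inl ENNReal.coe_ne_top), mul_comm]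
      rcases eq_or_ne (∫⁻ p, edist p.1 p.2 ∂π) ∞ with hc | hc
      · rw [hc, ENNReal.mul_top hK']; exact le_top
      · -- finite cost coupling
        have h1 : Integrable (fun p : Z × Z => g p.1) π := by
          rw [← hπ.1] at hgμ
          exact (integrable_map_measure hg.continuous.aestronglyMeasurable
            measurable_fst.aemeasurable).mp hgμ
        have h2 : Integrable (fun p : Z × Z => g p.2) π := by
          rw [← hπ.2] at hgν
          exact (integrable_map_measure hg.continuous.aestronglyMeasurable
            measurable_snd.aemeasurable).mp hgν
        have hiμ : ∫ z, g z ∂μ = ∫ p, g p.1 ∂π := by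
          rw [← hπ.1, integral_map measurable_fst.aemeasurable
            hg.continuous.aestronglyMeasurable]
        have hiν : ∫ z, g z ∂ν = ∫ p, g p.2 ∂π := by
          rw [← hπ.2, integral_map measurable_snd.aemeasurable
            hg.continuous.aestronglyMeasurable]
        have hlint : ∫⁻ p, (‖g p.1 - g p.2‖₊ : ℝ≥0∞) ∂π
            ≤ (K : ℝ≥0∞) * ∫⁻ p, edist p.1 p.2 ∂π := by
          rw [← lintegral_const_mul' _ _ ENNReal.coe_ne_top]
          refine lintegral_mono fun p => ?_
          rw [← enorm_eq_nnnorm, ← edist_eq_enorm_sub]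
          exact hg.edist_le_mul p.1 p.2
        have habs : |∫ z, g z ∂μ - ∫ z, g z ∂ν|
            ≤ ((K : ℝ≥0∞) * ∫⁻ p, edist p.1 p.2 ∂π).toReal := by
          rw [hiμ, hiν, ← integral_sub h1 h2]
          calc |∫ p, g p.1 - g p.2 ∂π| ≤ ∫ p, ‖g p.1 - g p.2‖ ∂π := by
                simpa using norm_integral_le_integral_norm (fun p : Z × Z => g p.1 - g p.2)
            _ = (∫⁻ p, (‖g p.1 - g p.2‖₊ : ℝ≥0∞) ∂π).toReal :=
                integral_norm_eq_lintegral_enorm (h1.sub h2).aestronglyMeasurable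
            _ ≤ _ := ENNReal.toReal_mono
                (ENNReal.mul_ne_top ENNReal.coe_ne_top hc) hlint
        exact ENNReal.ofReal_le_of_le_toReal habs
    have hkey : ENNReal.ofReal |∫ z, g z ∂μ - ∫ z, g z ∂ν| ≤ (K : ℝ≥0∞) * W1 μ ν := by
      have := (ENNReal.div_le_iff_le_mul (Or.inl hK') (Or.inl ENNReal.coe_ne_top)).mp hdiv
      rwa [mul_comm] at this
    have := ENNReal.toReal_mono (ENNReal.mul_ne_top ENNReal.coe_ne_top hW) hkey
    rwa [ENNReal.toReal_ofReal (abs_nonneg _), ENNReal.toReal_mul, ENNReal.coe_toReal] at this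

end Helpers

/-- the target-domain group gap for `o ∘ f` is bounded by
`L_o L_f (W₁(νs⁰,νs¹) + δ_t⁰ + δ_t¹ + δ_s⁰ + δ_s¹ + 2 Δ_ts)`. -/
theorem ugf_upper_bound {Z Y : Type*} [MetricSpace Z] [MeasurableSpace Z]
    [OpensMeasurableSpace Z] [MetricSpace Y]
    (νt₀ νt₁ νs₀ νs₁ νt νs : Measure Z)
    [IsProbabilityMeasure νt₀] [IsProbabilityMeasure νt₁]
    [IsProbabilityMeasure νs₀] [IsProbabilityMeasure νs₁]
    [IsProbabilityMeasure νt] [IsProbabilityMeasure νs]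
    (ht₀ : FiniteFirstMoment νt₀) (ht₁ : FiniteFirstMoment νt₁)
    (hs₀ : FiniteFirstMoment νs₀) (hs₁ : FiniteFirstMoment νs₁)
    (ht : FiniteFirstMoment νt) (hs : FiniteFirstMoment νs)
    (Lf Lo : ℝ≥0) (f : Z → Y) (o : Y → ℝ)
    (hf : LipschitzWith Lf f) (ho : LipschitzWith Lo o) :
    |∫ z, o (f z) ∂νt₀ - ∫ z, o (f z) ∂νt₁|
      ≤ Lo * Lf * ((W1 νs₀ νs₁).toReal
          + (W1 νt₀ νt).toReal + (W1 νt₁ νt).toReal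
          + (W1 νs₀ νs).toReal + (W1 νs₁ νs).toReal
          + 2 * (W1 νt νs).toReal) := by
  have hg : LipschitzWith (Lo * Lf) (fun z => o (f z)) := ho.comp hf
  have hA := abs_integral_sub_le νt₀ νt ht₀ ht (Lo * Lf) _ hg
  have hB := abs_integral_sub_le νt₁ νt ht₁ ht (Lo * Lf) _ hg
  have htri : |∫ z, o (f z) ∂νt₀ - ∫ z, o (f z) ∂νt₁|
      ≤ |∫ z, o (f z) ∂νt₀ - ∫ z, o (f z) ∂νt|
        + |∫ z, o (f z) ∂νt₁ - ∫ z, o (f z) ∂νt| := by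
    rw [abs_sub_comm (∫ z, o (f z) ∂νt₁)]
    exact abs_sub_le _ _ _
  have hc : ((Lo * Lf : ℝ≥0) : ℝ) = (Lo : ℝ) * (Lf : ℝ) := by push_cast; ring
  rw [hc] at hA hB
  have n1 : (0:ℝ) ≤ (W1 νs₀ νs₁).toReal := ENNReal.toReal_nonneg
  have n2 : (0:ℝ) ≤ (W1 νs₀ νs).toReal := ENNReal.toReal_nonneg
  have n3 : (0:ℝ) ≤ (W1 νs₁ νs).toReal := ENNReal.toReal_nonneg
  have n4 : (0:ℝ) ≤ (W1 νt νs).toReal := ENNReal.toReal_nonneg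
  have hL : (0:ℝ) ≤ (Lo : ℝ) * (Lf : ℝ) := by positivity
  nlinarith [htri, hA, hB, mul_nonneg hL n1, mul_nonneg hL n2, mul_nonneg hL n3,
    mul_nonneg hL n4]
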